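/- Under Assumption A with α > 0 and k > 0, writing μ_{2r} = E[(η²)^r] and μ*_{2r} = E[(η²)^r · 1[η² > k/α]] for r ∈ (0,1], one has lim_{r→0⁺} α^{2r}·μ_{2r}·μ*_{2r} = P[η² > k/α] < 1. In particular, there exists r ∈ (0,1] such that α^{2r}·μ_{2r}·μ*_{2r} < 1. -/

import Mathlib

open MeasureTheory ProbabilityTheory Set Filter
open scoped ENNReal

/-- Under Assumption A with `α > 0` and `k > 0`, writing `μ_{2r} = E[(η²)^r]` and
`μ*_{2r} = E[(η²)^r 1_{η² > k/α}]`, one has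
`α^{2r} μ_{2r} μ*_{2r} → P[η² > k/α] < 1` as `r → 0⁺`; in particular
`α^{2r} μ_{2r} μ*_{2r} < 1` for some `r ∈ (0,1]`. -/
theorem stmt10
    {Ω' : Type*} [MeasurableSpace Ω'] (P : Measure Ω') [IsProbabilityMeasure P]
    (α k : ℝ) (hα : 0 < α) (hk : 0 < k)
    (η : Ω' → ℝ) (hη : Measurable η)
    (f : ℝ → ℝ≥0∞) (hf : Measurable f) (hfpos : ∀ x, 0 ≤ x → 0 < f x)
    (hd : Measure.map (fun z => (η z) ^ 2) P = (volume.restrict (Ici (0 : ℝ))).withDensity f)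
    (hint : Integrable η P) (hm : ∫ z, η z ∂P = 0) (hv : ∫ z, (η z) ^ 2 ∂P = 1) :
    Tendsto
      (fun r : ℝ => α ^ (2 * r) * (∫ z, ((η z) ^ 2) ^ r ∂P) *
        ∫ z, ((η z) ^ 2) ^ r * (if k / α < (η z) ^ 2 then (1 : ℝ) else 0) ∂P)
      (nhdsWithin 0 (Ioi 0))
      (nhds (P {z | k / α < (η z) ^ 2}).toReal) ∧
    (P {z | k / α < (η z) ^ 2}).toReal < 1 ∧
    ∃ r : ℝ, r ∈ Ioc (0 : ℝ) 1 ∧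
      α ^ (2 * r) * (∫ z, ((η z) ^ 2) ^ r ∂P) *
        (∫ z, ((η z) ^ 2) ^ r * (if k / α < (η z) ^ 2 then (1 : ℝ) else 0) ∂P) < 1 := by
  set c : ℝ := k / α with hc
  have hc0 : 0 < c := div_pos hk hα
  set X : Ω' → ℝ := fun z => (η z) ^ 2 with hX
  have hXm : Measurable X := hη.pow_const 2
  have hXnn : ∀ z, 0 ≤ X z := fun z => sq_nonneg _
  set s : Set Ω' := {z | c < X z} with hs
  have hsm : MeasurableSet s := measurableSet_lt measurable_const hXm
  -- X is integrable
  have hXint : Integrable X P := by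
    by_contra h
    rw [integral_undef h] at hv
    exact one_ne_zero hv.symm
  -- X > 0 a.e.
  have hae0 : ∀ᵐ z ∂P, 0 < X z := by
    have h0 : P {z | X z = 0} = 0 := by
      have : {z | X z = 0} = X ⁻¹' {0} := rfl
      rw [this, ← Measure.map_apply hXm (measurableSet_singleton 0), hd,
        withDensity_apply _ (measurableSet_singleton 0)]
      apply setLIntegral_measure_zero
      exact le_antisymm ((Measure.restrict_apply_le _ _).trans (by simp)) zero_le
    filter_upwards [measure_eq_zero_iff_ae_notMem.mp h0] with z hz
    exact lt_of_le_of_ne (hXnn z) (Ne.symm hz)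
  -- P {X ≤ c} > 0
  have hcompl : P {z | X z ≤ c} ≠ 0 := by
    intro h0
    have hmeq : P {z | X z ≤ c} = ∫⁻ x in Iic c ∩ Ici 0, f x := by
      have : {z | X z ≤ c} = X ⁻¹' (Iic c) := rfl
      rw [this, ← Measure.map_apply hXm measurableSet_Iic, hd,
        withDensity_apply _ measurableSet_Iic, Measure.restrict_restrict measurableSet_Iic]
    rw [hmeq] at h0
    have hIcc : Iic c ∩ Ici 0 = Icc 0 c := by
      ext x; simp [and_comm]
    rw [hIcc, lintegral_eq_zero_iff hf, EventuallyEq, ae_restrict_iff' measurableSet_Icc,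
      ae_iff] at h0
    have hsub : Icc (0:ℝ) c ⊆ {x | ¬(x ∈ Icc 0 c → f x = (0 : ℝ → ℝ≥0∞) x)} := by
      intro x hx
      simp only [mem_setOf_eq, Classical.not_imp]
      exact ⟨hx, (hfpos x hx.1).ne'⟩
    have := measure_mono (μ := (volume : Measure ℝ)) hsub
    rw [h0, nonpos_iff_eq_zero, Real.volume_Icc] at this
    simp only [sub_zero] at this
    exact (ENNReal.ofReal_pos.mpr hc0).ne' this
  -- P s < 1
  have hPs_lt : P s < 1 := by
    by_contra h
    push_neg at h
    have h1 : P s = 1 := le_antisymm prob_le_one h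
    have : P sᶜ = 0 := by
      have := measure_compl hsm (measure_ne_top P s)
      rw [h1, measure_univ] at this
      simpa using this
    apply hcompl
    refine le_antisymm (le_trans (measure_mono ?_) this.le) zero_le
    intro z hz
    simpa [s, not_lt] using hz
  have hL1 : (P s).toReal < 1 := by
    have := ENNReal.toReal_lt_toReal (measure_ne_top P s) (by norm_num : (1:ℝ≥0∞) ≠ ⊤)
    simpa using this.mpr hPs_lt
  -- pointwise limits
  have hIoc : Ioc (0:ℝ) 1 ∈ nhdsWithin (0:ℝ) (Ioi 0) :=
    Ioc_mem_nhdsGT_of_mem ⟨le_refl _, one_pos⟩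
  have hmeas : ∀ r : ℝ, AEStronglyMeasurable (fun z => (X z) ^ r) P :=
    fun r => (hXm.pow measurable_const).aestronglyMeasurable
  have hbound_int : Integrable (fun z => max 1 (X z)) P :=
    (integrable_const (1:ℝ)).sup hXint
  have hbd : ∀ r ∈ Ioc (0:ℝ) 1, ∀ z, |(X z) ^ r| ≤ max 1 (X z) := by
    intro r hr z
    rw [abs_of_nonneg (Real.rpow_nonneg (hXnn z) r)]
    rcases le_or_gt (X z) 1 with h | h
    · exact le_max_of_le_left (Real.rpow_le_one (hXnn z) h hr.1.le)
    · refine le_max_of_le_right ?_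
      calc (X z) ^ r ≤ (X z) ^ (1:ℝ) :=
            Real.rpow_le_rpow_of_exponent_le h.le hr.2
        _ = X z := Real.rpow_one _
  have hlim : ∀ᵐ z ∂P, Tendsto (fun r : ℝ => (X z) ^ r) (nhdsWithin 0 (Ioi 0)) (nhds 1) := by
    filter_upwards [hae0] with z hz
    have : ContinuousAt (fun r : ℝ => (X z) ^ r) 0 :=
      Real.continuousAt_const_rpow hz.ne'
    have h1 : Tendsto (fun r : ℝ => (X z) ^ r) (nhds 0) (nhds ((X z) ^ (0:ℝ))) := this
    rw [Real.rpow_zero] at h1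
    exact h1.mono_left nhdsWithin_le_nhds
  -- first integral tends to 1
  have hT1 : Tendsto (fun r : ℝ => ∫ z, (X z) ^ r ∂P) (nhdsWithin 0 (Ioi 0)) (nhds 1) := by
    have := tendsto_integral_filter_of_dominated_convergence (μ := P)
      (F := fun r z => (X z) ^ r) (f := fun _ => (1:ℝ)) (fun z => max 1 (X z))
      (Eventually.of_forall hmeas)
      (by filter_upwards [hIoc] with r hr; exact Eventually.of_forall fun z => hbd r hr z)
      hbound_int hlim
    simpa using this
  -- second integral tends to (P s).toReal
  have hT2 : Tendsto
      (fun r : ℝ => ∫ z, (X z) ^ r * (if c < X z then (1:ℝ) else 0) ∂P)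
      (nhdsWithin 0 (Ioi 0)) (nhds (P s).toReal) := by
    have hind : (∫ z, (if c < X z then (1:ℝ) else 0) ∂P) = (P s).toReal := by
      have heq : (fun z => (if c < X z then (1:ℝ) else 0)) = s.indicator (fun _ => (1:ℝ)) := by
        ext z; simp [s, indicator_apply]
      rw [heq, integral_indicator_const _ hsm]; simp [Measure.real]
    have := tendsto_integral_filter_of_dominated_convergence (μ := P)
      (F := fun r z => (X z) ^ r * (if c < X z then (1:ℝ) else 0))
      (f := fun z => (if c < X z then (1:ℝ) else 0)) (fun z => max 1 (X z))
      (Eventually.of_forall fun r => (hmeas r).mul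
        ((measurable_const.ite (measurableSet_lt measurable_const hXm)
          measurable_const).aestronglyMeasurable))
      (by
        filter_upwards [hIoc] with r hr
        refine Eventually.of_forall fun z => ?_
        have h1 : |(X z) ^ r * (if c < X z then (1:ℝ) else 0)| ≤ |(X z) ^ r| := by
          rw [abs_mul]
          have : |(if c < X z then (1:ℝ) else 0)| ≤ 1 := by split <;> simp
          nlinarith [abs_nonneg ((X z) ^ r)]
        exact h1.trans (hbd r hr z))
      hbound_int
      (by
        filter_upwards [hlim] with z hz
        have := hz.mul_const (if c < X z then (1:ℝ) else 0)
        simpa using this)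
    rwa [hind] at this
  -- α^(2r) tends to 1
  have hT0 : Tendsto (fun r : ℝ => α ^ (2 * r)) (nhdsWithin 0 (Ioi 0)) (nhds 1) := by
    have hc : ContinuousAt (fun x : ℝ => α ^ x) 0 := Real.continuousAt_const_rpow hα.ne'
    have h2 : Tendsto (fun r : ℝ => 2 * r) (nhds 0) (nhds 0) := by
      have : Tendsto (fun r : ℝ => 2 * r) (nhds 0) (nhds (2 * 0)) :=
        (continuous_mul_left (2:ℝ)).tendsto 0
      simpa using this
    have := hc.tendsto.comp h2
    rw [Real.rpow_zero] at this
    exact this.mono_left nhdsWithin_le_nhds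
  have hT : Tendsto
      (fun r : ℝ => α ^ (2 * r) * (∫ z, (X z) ^ r ∂P) *
        ∫ z, (X z) ^ r * (if c < X z then (1:ℝ) else 0) ∂P)
      (nhdsWithin 0 (Ioi 0)) (nhds (P s).toReal) := by
    have := (hT0.mul hT1).mul hT2
    simpa using this
  refine ⟨hT, hL1, ?_⟩
  have hev : ∀ᶠ r in nhdsWithin (0:ℝ) (Ioi 0),
      α ^ (2 * r) * (∫ z, (X z) ^ r ∂P) *
        (∫ z, (X z) ^ r * (if c < X z then (1:ℝ) else 0) ∂P) < 1 :=
    hT.eventually_lt_const hL1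
  obtain ⟨r, hr1, hr2⟩ := (hev.and hIoc).exists
  exact ⟨r, hr2, hr1⟩
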